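/- For λ ∈ ℝ, with γ = (1-λ)/(1+λ²) and δ = 1/(1+λ²), the 6×6 matrix P₃ with nonzero entries P₃(1,3)=P₃(3,1)=P₃(4,6)=P₃(6,4)=γ, P₃(2,2)=P₃(2,4)=P₃(4,2)=P₃(3,5)=P₃(5,3)=P₃(5,5)=δ, P₃(3,3)=P₃(4,4)=1, satisfies H(λ)ᵀ P₃ = P₃ H(λ) with the 6×6 discrete square-well Hamiltonian H(λ). -/
import Mathlib

open Matrix Polynomial

/-- The N×N discrete PT-symmetric square-well Hamiltonian (0-indexed). -/
noncomputable def Ham (N : ℕ) (l : ℝ) : Matrix (Fin N) (Fin N) ℝ :=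
  Matrix.of fun i j =>
    if (i : ℕ) = j then 2
    else if (j : ℕ) = (i : ℕ) + 1 then
      (if (i : ℕ) = 0 then -1 - l else if (j : ℕ) = N - 1 then -1 + l else -1)
    else if (i : ℕ) = (j : ℕ) + 1 then
      (if (j : ℕ) = 0 then -1 + l else if (i : ℕ) = N - 1 then -1 - l else -1)
    else 0

/-- The pseudometric P₃ for N = 6, with γ = (1-λ)/(1+λ²), δ = 1/(1+λ²). -/
noncomputable def P3 (l : ℝ) : Matrix (Fin 6) (Fin 6) ℝ :=
  let γ := (1 - l) / (1 + l ^ 2)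
  let δ := 1 / (1 + l ^ 2)
  !![0, 0, γ, 0, 0, 0;
     0, δ, 0, δ, 0, 0;
     γ, 0, 1, 0, δ, 0;
     0, δ, 0, 1, 0, γ;
     0, 0, δ, 0, δ, 0;
     0, 0, 0, γ, 0, 0]

@[simp]
lemma cons_val_five' {m : ℕ} {α : Type*} (x : α) (u : Fin (m+5) → α) :
    Matrix.vecCons x u 5 = Matrix.vecHead (Matrix.vecTail (Matrix.vecTail (Matrix.vecTail (Matrix.vecTail u)))) :=
  rfl

lemma Ham6 (l : ℝ) : Ham 6 l =
    !![2, -1-l, 0, 0, 0, 0;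
       -1+l, 2, -1, 0, 0, 0;
       0, -1, 2, -1, 0, 0;
       0, 0, -1, 2, -1, 0;
       0, 0, 0, -1, 2, -1+l;
       0, 0, 0, 0, -1-l, 2] := by
  ext i j
  fin_cases i <;> fin_cases j <;> rfl

set_option maxHeartbeats 2000000 in
theorem stmt14 (l : ℝ) : (Ham 6 l)ᵀ * P3 l = P3 l * Ham 6 l := by
  have h : (1:ℝ) + l ^ 2 ≠ 0 := by positivity
  rw [Ham6]
  ext i j
  fin_cases i <;> fin_cases j <;>
    simp [P3, Matrix.mul_apply, Fin.sum_univ_six, Matrix.transpose_apply,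
      Matrix.vecHead, Matrix.vecTail] <;>
    (field_simp; try ring)
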